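/- For any integer n > 1, if n = p^i for some prime p and integer i > 0, then the greatest common divisor of the binomial coefficients C(n,1), C(n,2), ..., C(n,n-1) equals p. -/

import Mathlib

theorem stmt_0 (n p i : ℕ) (hn : 1 < n) (hp : p.Prime) (hi : 0 < i)
    (hpow : n = p ^ i) :
    Finset.gcd (Finset.Ioo 0 n) (fun k => Nat.choose n k) = p := by
  subst hpow
  have hpp : Prime p := hp.prime
  -- p divides the gcd
  have hdvd : p ∣ Finset.gcd (Finset.Ioo 0 (p ^ i)) (fun k => Nat.choose (p ^ i) k) := by
    apply Finset.dvd_gcd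
    intro k hk
    rw [Finset.mem_Ioo] at hk
    exact hp.dvd_choose_pow (by omega) (by omega)
  -- gcd divides choose (p^i) 1 = p^i
  have h1 : (1 : ℕ) ∈ Finset.Ioo 0 (p ^ i) := by simp [hn]
  have hg1 : Finset.gcd (Finset.Ioo 0 (p ^ i)) (fun k => Nat.choose (p ^ i) k) ∣ p ^ i := by
    have := Finset.gcd_dvd (f := fun k => Nat.choose (p ^ i) k) h1
    simpa using this
  obtain ⟨j, hj, hgj⟩ := (Nat.dvd_prime_pow hp).mp hg1
  -- the gcd divides choose (p^i) (p^(i-1)), which has p-adic valuation 1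
  have hmem : p ^ (i - 1) ∈ Finset.Ioo 0 (p ^ i) := by
    rw [Finset.mem_Ioo]
    constructor
    · exact Nat.pow_pos hp.pos
    · exact Nat.pow_lt_pow_right hp.one_lt (by omega)
  have hg2 : Finset.gcd (Finset.Ioo 0 (p ^ i)) (fun k => Nat.choose (p ^ i) k) ∣
      Nat.choose (p ^ i) (p ^ (i - 1)) := Finset.gcd_dvd hmem
  have hval : emultiplicity p (Nat.choose (p ^ i) (p ^ (i - 1))) = (1 : ℕ) := by
    rw [hp.emultiplicity_choose_prime_pow (Nat.le_of_lt (Finset.mem_Ioo.mp hmem).2)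
      (Nat.pow_pos hp.pos).ne', multiplicity_pow_self_of_prime hpp]
    congr 1
    omega
  have hnot : ¬ p ^ 2 ∣ Nat.choose (p ^ i) (p ^ (i - 1)) := by
    rw [← emultiplicity_lt_iff_not_dvd, hval]
    exact_mod_cast Nat.one_lt_two
  -- so j ≤ 1, and j ≥ 1 since p ∣ gcd
  have hj1 : j ≤ 1 := by
    by_contra h
    exact hnot ((pow_dvd_pow p (by omega)).trans (hgj ▸ hg2))
  interval_cases j
  · exfalso
    rw [hgj, pow_zero] at hdvd
    exact hp.one_lt.ne' (Nat.eq_one_of_dvd_one hdvd)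
  · simpa using hgj
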